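/- Let N be a normal subgroup of a finite group G such that G/N has self-normalizing Sylow p-subgroups, and let H ≤ G have index coprime to p in G. Then H is pronormal in G if and only if H is pronormal in HN. -/

import Mathlib

/-- A group `G` belongs to the class `𝒳_p` if every Sylow `p`-subgroup is self-normalizing. -/
def SylowSelfNormalizing (p : ℕ) (G : Type*) [Group G] : Prop :=
  ∀ P : Sylow p G, Subgroup.normalizer ((P : Subgroup G) : Set G) = P

/-- The conjugate subgroup `H^g = g H g⁻¹` (conjugation by `g`). -/
def conjSub {G : Type*} [Group G] (g : G) (H : Subgroup G) : Subgroup G :=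
  H.map (MulAut.conj g).toMonoidHom

/-- A subgroup `H` of `G` is pronormal in `G` if for every `g ∈ G` the subgroups `H` and
`H^g` are conjugate by an element of `⟨H, H^g⟩`. -/
def IsPronormal {G : Type*} [Group G] (H : Subgroup G) : Prop :=
  ∀ g : G, ∃ x ∈ H ⊔ conjSub g H, conjSub x H = conjSub g H

section Aux

open scoped Pointwise

variable {G : Type*} [Group G]

lemma mem_conjSub {g a : G} {H : Subgroup G} : a ∈ conjSub g H ↔ g⁻¹ * a * g ∈ H := by
  simp only [conjSub, Subgroup.mem_map_equiv, MulAut.conj_symm_apply]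

lemma conjSub_conjSub (a b : G) (H : Subgroup G) :
    conjSub a (conjSub b H) = conjSub (a * b) H := by
  ext x
  simp only [mem_conjSub]
  have e : b⁻¹ * (a⁻¹ * x * a) * b = (a * b)⁻¹ * x * (a * b) := by group
  rw [e]

lemma conjSub_mono (g : G) {H K : Subgroup G} (h : H ≤ K) : conjSub g H ≤ conjSub g K := by
  intro a ha
  rw [mem_conjSub] at ha ⊢
  exact h ha

lemma conjSub_le_of_mem {g : G} {H K : Subgroup G} (hg : g ∈ K) (h : H ≤ K) :
    conjSub g H ≤ K := by
  intro a ha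
  rw [mem_conjSub] at ha
  have : g * (g⁻¹ * a * g) * g⁻¹ ∈ K := K.mul_mem (K.mul_mem hg (h ha)) (K.inv_mem hg)
  simpa [mul_assoc] using this

lemma map_conjSub {G' : Type*} [Group G'] (f : G →* G') (g : G) (H : Subgroup G) :
    (conjSub g H).map f = conjSub (f g) (H.map f) := by
  simp only [conjSub, Subgroup.map_map]
  congr 1
  ext a
  simp [MulAut.conj_apply]

lemma conjSub_eq_smul (g : G) (H : Subgroup G) : conjSub g H = MulAut.conj g • H := by
  ext a
  rw [mem_conjSub, Subgroup.mem_pointwise_smul_iff_inv_smul_mem]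
  simp [MulAut.smul_def]

/-- Translation of pronormality of `H.subgroupOf M` to a statement in `G`. -/
lemma isPronormal_subgroupOf_iff {H M : Subgroup G} (hHM : H ≤ M) :
    IsPronormal (H.subgroupOf M) ↔
      ∀ g ∈ M, ∃ x ∈ H ⊔ conjSub g H, conjSub x H = conjSub g H := by
  have hmapH : (H.subgroupOf M).map M.subtype = H := by
    rw [Subgroup.subgroupOf_map_subtype, inf_eq_left.mpr hHM]
  constructor
  · intro hp g hg
    obtain ⟨x, hx, hconj⟩ := hp ⟨g, hg⟩
    refine ⟨(x : G), ?_, ?_⟩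
    · have := Subgroup.mem_map_of_mem M.subtype hx
      rwa [Subgroup.map_sup, hmapH, map_conjSub, hmapH] at this
    · have := congrArg (Subgroup.map M.subtype) hconj
      rwa [map_conjSub, map_conjSub, hmapH] at this
  · intro hp g
    obtain ⟨x, hx, hconj⟩ := hp (g : G) g.2
    have hxM : x ∈ M := by
      refine (sup_le hHM (conjSub_le_of_mem g.2 hHM)) hx
    refine ⟨⟨x, hxM⟩, ?_, ?_⟩
    · have hx' : x ∈ ((H.subgroupOf M) ⊔ conjSub g (H.subgroupOf M)).map M.subtype := by
        rwa [Subgroup.map_sup, hmapH, map_conjSub, hmapH]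
      obtain ⟨y, hy, hyx⟩ := hx'
      have : y = ⟨x, hxM⟩ := Subtype.ext hyx
      rwa [this] at hy
    · apply Subgroup.map_injective M.subtype_injective
      rw [map_conjSub, map_conjSub, hmapH]
      exact hconj

end Aux

/-- Let `N ⊴ G` with `G/N ∈ 𝒳_p`, and let `H ≤ G` have index coprime
to `p`. Then `H` is pronormal in `G` iff `H` is pronormal in `HN`. -/
theorem stmt13 {p : ℕ} [Fact p.Prime] {G : Type*} [Group G] [Finite G]
    (N : Subgroup G) [N.Normal] (hQ : SylowSelfNormalizing p (G ⧸ N))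
    (H : Subgroup G) (hH : Nat.Coprime H.index p) :
    IsPronormal H ↔ IsPronormal (H.subgroupOf (H ⊔ N)) := by
  rw [isPronormal_subgroupOf_iff le_sup_left]
  constructor
  · intro hp g _
    exact hp g
  · intro hp g
    set φ := QuotientGroup.mk' N with hφ
    have hφsurj : Function.Surjective φ := QuotientGroup.mk'_surjective N
    set Hb : Subgroup (G ⧸ N) := H.map φ with hHb
    -- the index of Hb is coprime to p
    have hHbindex : ¬ p ∣ Hb.index := by
      intro hdvd
      have h1 : Nat.Coprime Hb.index p :=
        Nat.Coprime.coprime_dvd_left (Subgroup.index_map_dvd H hφsurj) hH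
      have := Nat.eq_one_of_dvd_coprimes h1 hdvd dvd_rfl
      exact (Fact.out : p.Prime).one_lt.ne' this
    -- find a Sylow p-subgroup of G ⧸ N inside Hb
    obtain ⟨Q⟩ : Nonempty (Sylow p Hb) := Sylow.nonempty
    have hQpg : IsPGroup p ((Q : Subgroup Hb).map Hb.subtype) := Q.2.map Hb.subtype
    have hQidx : ¬ p ∣ ((Q : Subgroup Hb).map Hb.subtype).index := by
      rw [Subgroup.index_map_subtype]
      exact Nat.Prime.not_dvd_mul Fact.out Q.not_dvd_index hHbindex
    set P : Sylow p (G ⧸ N) := hQpg.toSylow hQidx with hP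
    have hPle : (P : Subgroup (G ⧸ N)) ≤ Hb := by
      rw [hP, IsPGroup.toSylow_coe]
      exact Subgroup.map_subtype_le _
    -- Hb is abnormal in G ⧸ N : φ g ∈ L
    set L : Subgroup (G ⧸ N) := Hb ⊔ conjSub (φ g) Hb with hL
    have hHbL : Hb ≤ L := le_sup_left
    have hPL : (P : Subgroup (G ⧸ N)) ≤ L := hPle.trans hHbL
    have hP2L : ((φ g • P : Sylow p (G ⧸ N)) : Subgroup (G ⧸ N)) ≤ L := by
      rw [Sylow.coe_subgroup_smul, ← conjSub_eq_smul]
      exact (conjSub_mono (φ g) hPle).trans le_sup_right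
    obtain ⟨l, hl⟩ := MulAction.exists_smul_eq (↥L) (P.subtype hPL) ((φ g • P).subtype hP2L)
    rw [Sylow.smul_subtype] at hl
    have hl2 : (l : G ⧸ N) • P = φ g • P := Sylow.subtype_injective hl
    have hmem : (φ g)⁻¹ * (l : G ⧸ N) ∈ (P : Subgroup (G ⧸ N)) := by
      rw [← hQ P]
      exact (Sylow.smul_eq_iff_mem_normalizer (P := P)).mp (by rw [mul_smul, hl2, inv_smul_smul])
    have hgL : φ g ∈ L := by
      have h1 : (φ g)⁻¹ * (l : G ⧸ N) ∈ L := hHbL (hPle hmem)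
      have h2 : (l : G ⧸ N) ∈ L := l.2
      have : (l : G ⧸ N) * ((φ g)⁻¹ * (l : G ⧸ N))⁻¹ ∈ L := L.mul_mem h2 (L.inv_mem h1)
      simpa [mul_assoc] using this
    -- pull back : g = k * n with k ∈ K := H ⊔ conjSub g H and n ∈ N
    set K : Subgroup G := H ⊔ conjSub g H with hK
    have hKmap : K.map φ = L := by
      rw [hK, Subgroup.map_sup, map_conjSub]
    obtain ⟨k, hk, hkg⟩ : ∃ k ∈ K, φ k = φ g := by
      rw [← hKmap] at hgL
      obtain ⟨k, hk, hkg⟩ := hgL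
      exact ⟨k, hk, hkg⟩
    have hnN : k⁻¹ * g ∈ N := by
      have : φ (k⁻¹ * g) = 1 := by
        rw [map_mul, map_inv, hkg, inv_mul_cancel]
      rwa [← QuotientGroup.ker_mk' N, MonoidHom.mem_ker]
    -- use pronormality of H in H ⊔ N with n := k⁻¹ * g
    obtain ⟨x, hx, hconj⟩ := hp (k⁻¹ * g) (le_sup_right (α := Subgroup G) hnN)
    have hsub : H ⊔ conjSub (k⁻¹ * g) H ≤ K := by
      refine sup_le le_sup_left ?_
      rw [← conjSub_conjSub]
      exact (conjSub_mono k⁻¹ le_sup_right).trans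
        (conjSub_le_of_mem (K.inv_mem hk) le_rfl)
    refine ⟨k * x, K.mul_mem hk (hsub hx), ?_⟩
    rw [← conjSub_conjSub, hconj, conjSub_conjSub, mul_inv_cancel_left]
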